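/- If γ₁ = a₁/q₁ < γ₂ = a₂/q₂ are consecutive elements of 𝔖𝔉*_Q = {0} ∪ 𝔖𝔉_Q for some Q ≥ 3, then a₂q₁ − a₁q₂ = 1. In other words, 𝔖𝔉*_Q defines a unimodular partition of [0,1]. -/

import Mathlib

/-- `IsH a q v` means `v = h(a/q)`, where `h(a/q) = q + a + ab` with `ab` the
multiplicative inverse of `a` mod `q` in `[1, q)`, `h(0/1) = 1` and `h(1/1) = 3`. -/
def IsH (a q v : ℤ) : Prop :=
  (a = 0 ∧ q = 1 ∧ v = 1) ∨ (a = 1 ∧ q = 1 ∧ v = 3) ∨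
  (0 < a ∧ a < q ∧ ∃ ab : ℤ, 1 ≤ ab ∧ ab < q ∧ a * ab ≡ 1 [ZMOD q] ∧ v = q + a + ab)

/-- The set of SL(2,ℕ)-saturated Farey fractions of order Q. -/
def SF (Q : ℤ) : Set ℚ :=
  {x : ℚ | 0 < x ∧ x ≤ 1 ∧ ∃ v : ℤ, IsH x.num (x.den : ℤ) v ∧ v ≤ Q}

/-- The set 𝔖𝔉*_Q = {0} ∪ 𝔖𝔉_Q. -/
def SFstar (Q : ℤ) : Set ℚ := {0} ∪ SF Q

private lemma coprime_of_bezout {p r u v : ℤ} (h : u * p + v * r = 1) :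
    Nat.Coprime p.natAbs r.natAbs :=
  Int.isCoprime_iff_gcd_eq_one.mp ⟨u, v, h⟩

private lemma div_lt_iff'' {p r : ℤ} (hr : 0 < r) (y : ℚ) :
    (p : ℚ) / r < y ↔ p * (y.den : ℤ) < y.num * r := by
  have key := div_lt_div_iff₀ (a := (p : ℚ)) (c := (y.num : ℚ))
    (show (0:ℚ) < (r:ℚ) by exact_mod_cast hr)
    (show (0:ℚ) < ((y.den : ℤ) : ℚ) by exact_mod_cast y.pos)
  push_cast at key
  rw [Rat.num_div_den y] at key
  rw [key]
  exact ⟨fun h => by exact_mod_cast h, fun h => by exact_mod_cast h⟩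

private lemma lt_div_iff'' {p r : ℤ} (hr : 0 < r) (y : ℚ) :
    y < (p : ℚ) / r ↔ y.num * r < p * (y.den : ℤ) := by
  have key := div_lt_div_iff₀ (a := (y.num : ℚ)) (c := (p : ℚ))
    (show (0:ℚ) < ((y.den : ℤ) : ℚ) by exact_mod_cast y.pos)
    (show (0:ℚ) < (r:ℚ) by exact_mod_cast hr)
  push_cast at key
  rw [Rat.num_div_den y] at key
  rw [key]
  exact ⟨fun h => by exact_mod_cast h, fun h => by exact_mod_cast h⟩

private lemma den_between {p r p' r' : ℤ} (hr : 0 < r) (hr' : 0 < r')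
    (hdet : p' * r - p * r' = 1) {y : ℚ}
    (h1 : (p : ℚ) / r < y) (h2 : y < (p' : ℚ) / r') :
    r + r' ≤ (y.den : ℤ) ∧ ((y.den : ℤ) = r + r' → y.num = p + p') := by
  have A : p * (y.den : ℤ) < y.num * r := (div_lt_iff'' hr y).mp h1
  have B : y.num * r' < p' * (y.den : ℤ) := (lt_div_iff'' hr' y).mp h2
  have A1 : 1 ≤ y.num * r - p * (y.den : ℤ) := by linarith
  have B1 : 1 ≤ p' * (y.den : ℤ) - y.num * r' := by linarith
  have key : (y.den : ℤ) =
      r * (p' * (y.den : ℤ) - y.num * r') + r' * (y.num * r - p * (y.den : ℤ)) := by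
    linear_combination (-(y.den : ℤ)) * hdet
  have hA' : r' * 1 ≤ r' * (y.num * r - p * (y.den : ℤ)) :=
    mul_le_mul_of_nonneg_left A1 hr'.le
  have hB' : r * 1 ≤ r * (p' * (y.den : ℤ) - y.num * r') :=
    mul_le_mul_of_nonneg_left B1 hr.le
  constructor
  · linarith
  · intro hden
    have eA : y.num * r - p * (y.den : ℤ) = 1 := by
      by_contra hne
      have h2' : 2 ≤ y.num * r - p * (y.den : ℤ) := by omega
      have : r' * 2 ≤ r' * (y.num * r - p * (y.den : ℤ)) :=
        mul_le_mul_of_nonneg_left h2' hr'.le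
      linarith
    have eB : p' * (y.den : ℤ) - y.num * r' = 1 := by
      by_contra hne
      have h2' : 2 ≤ p' * (y.den : ℤ) - y.num * r' := by omega
      have : r * 2 ≤ r * (p' * (y.den : ℤ) - y.num * r') :=
        mul_le_mul_of_nonneg_left h2' hr.le
      linarith
    have hcancel : y.num * (r + r') = (p + p') * (r + r') := by
      linear_combination eA - eB + (p + p') * hden
    have hrr : r + r' ≠ 0 := by omega
    exact mul_right_cancel₀ hrr hcancel

private lemma exists_neighbors {Q : ℤ} (hQ : 3 ≤ Q) {x : ℚ} (hx : x ∈ SF Q)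
    (h0 : 0 < x.num) (h1 : x.num < (x.den : ℤ)) :
    ∃ p r p' r' : ℤ, 0 ≤ p ∧ 1 ≤ r ∧ 1 ≤ p' ∧ 1 ≤ r' ∧
      p + p' = x.num ∧ r + r' = (x.den : ℤ) ∧
      x.num * r - p * (x.den : ℤ) = 1 ∧
      (p : ℚ) / r ∈ SFstar Q ∧ (p' : ℚ) / r' ∈ SFstar Q := by
  obtain ⟨hxpos, hxle, v, hIsH, hvQ⟩ := hx
  rcases hIsH with ⟨ha, _, _⟩ | ⟨_, hq, _⟩ | ⟨ha0, haq, ab, hab1, habq, hmod, hv⟩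
  · omega
  · omega
  obtain ⟨k, hk⟩ := Int.ModEq.dvd hmod
  -- hk : 1 - x.num * ab = (x.den) * k
  have hq0 : (0:ℤ) < (x.den : ℤ) := by exact_mod_cast x.pos
  have hbez' : x.num * ab - (-k) * (x.den : ℤ) = 1 := by linear_combination -hk
  have hq2 : 2 ≤ (x.den : ℤ) := by omega
  have hp0 : 0 ≤ -k := by
    by_contra hc
    push_neg at hc
    have h1' : -k ≤ -1 := by omega
    nlinarith [mul_pos h0 (show (0:ℤ) < ab by omega)]
  have hpa : -k < x.num := by
    have h2 : x.num * ab ≤ x.num * ((x.den : ℤ) - 1) :=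
      mul_le_mul_of_nonneg_left (by omega) h0.le
    nlinarith
  have hvQ' : (x.den : ℤ) + x.num + ab ≤ Q := by omega
  refine ⟨-k, ab, x.num - -k, (x.den : ℤ) - ab, hp0, hab1, by omega, by omega,
    by ring, by ring, hbez', ?_, ?_⟩
  · -- left neighbor
    rcases eq_or_lt_of_le hp0 with hp' | hp'
    · left
      simp [← hp']
    · right
      have hpr : -k < ab := by
        have h2 : x.num * ab ≤ (x.den : ℤ) * ab := mul_le_mul_of_nonneg_right (by omega) (by omega)
        nlinarith
      have hr2 : 2 ≤ ab := by omega
      have hco : Nat.Coprime (-k).natAbs ab.natAbs :=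
        coprime_of_bezout (u := -(x.den : ℤ)) (v := x.num) (by linear_combination hbez')
      have hnum : (((-k : ℤ) : ℚ)/(ab : ℚ)).num = -k := Rat.num_div_eq_of_coprime (by omega) hco
      have hden : ((((-k : ℤ) : ℚ)/(ab : ℚ)).den : ℤ) = ab :=
        Rat.den_div_eq_of_coprime (by omega) hco
      have hrQ : (0:ℚ) < ((ab : ℤ) : ℚ) := by exact_mod_cast (show (0:ℤ) < ab by omega)
      have hmodpos : 0 < (x.den : ℤ) % ab := by
        rcases (Int.emod_nonneg (x.den : ℤ) (show ab ≠ 0 by omega)).lt_or_eq with h | h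
        · exact h
        · exfalso
          obtain ⟨c, hc⟩ := Int.dvd_of_emod_eq_zero h.symm
          have hrd : ab ∣ 1 := ⟨x.num - -k * c, by linear_combination -hbez' + k * hc⟩
          have := Int.le_of_dvd one_pos hrd
          omega
      have hmodlt : (x.den : ℤ) % ab < ab := Int.emod_lt_of_pos _ (by omega)
      refine ⟨by positivity, ?_, ab + -k + (ab - (x.den : ℤ) % ab), ?_, by omega⟩
      · rw [div_le_one hrQ]
        exact_mod_cast hpr.le
      · rw [hnum, hden]
        right; right
        refine ⟨hp', hpr, ab - (x.den : ℤ) % ab, by omega, by omega, ?_, rfl⟩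
        rw [Int.modEq_iff_dvd]
        refine ⟨x.num - -k - -k * ((x.den : ℤ) / ab), ?_⟩
        have hqr : (x.den : ℤ) % ab = (x.den : ℤ) - ab * ((x.den : ℤ) / ab) :=
          Int.emod_def (x.den : ℤ) ab
        linear_combination -hbez' + (-k) * hqr
  · -- right neighbor
    have hbez2 : (x.num - -k) * (x.den : ℤ) - x.num * ((x.den : ℤ) - ab) = 1 := by
      linear_combination hbez'
    have hp'1 : 1 ≤ x.num - -k := by omega
    have hr'1 : 1 ≤ (x.den : ℤ) - ab := by omega
    have hp'r' : x.num - -k ≤ (x.den : ℤ) - ab := by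
      have h2 : x.num * ((x.den : ℤ) - ab) ≤ ((x.den : ℤ) - 1) * ((x.den : ℤ) - ab) :=
        mul_le_mul_of_nonneg_right (by omega) (by omega)
      nlinarith
    rcases eq_or_lt_of_le hp'r' with heq | hlt'
    · -- the fraction is 1
      have hone : x.num - -k = 1 := by
        have hd : (x.num - -k) ∣ 1 :=
          ⟨(x.den : ℤ) - x.num, by linear_combination -hbez2 + x.num * heq⟩
        have := Int.le_of_dvd one_pos hd
        omega
      have hr'one : (x.den : ℤ) - ab = 1 := by omega
      have hfrac : ((x.num - -k : ℤ) : ℚ) / (((x.den : ℤ) - ab : ℤ) : ℚ) = 1 := by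
        rw [hone, hr'one]; norm_num
      push_cast at hfrac ⊢
      rw [hfrac]
      right
      refine ⟨one_pos, le_refl 1, 3, ?_, hQ⟩
      right; left
      norm_num
    · right
      have hr'2 : 2 ≤ (x.den : ℤ) - ab := by omega
      have hco : Nat.Coprime (x.num - -k).natAbs ((x.den : ℤ) - ab).natAbs :=
        coprime_of_bezout (u := (x.den : ℤ)) (v := -x.num) (by linear_combination hbez2)
      have hnum : (((x.num - -k : ℤ) : ℚ)/(((x.den : ℤ) - ab : ℤ) : ℚ)).num = x.num - -k :=
        Rat.num_div_eq_of_coprime (by omega) hco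
      have hden : ((((x.num - -k : ℤ) : ℚ)/(((x.den : ℤ) - ab : ℤ) : ℚ)).den : ℤ)
          = (x.den : ℤ) - ab := Rat.den_div_eq_of_coprime (by omega) hco
      have hrQ : (0:ℚ) < (((x.den : ℤ) - ab : ℤ) : ℚ) := by
        exact_mod_cast (show (0:ℤ) < (x.den : ℤ) - ab by omega)
      have hmodpos : 0 < (x.den : ℤ) % ((x.den : ℤ) - ab) := by
        rcases (Int.emod_nonneg (x.den : ℤ)
            (show (x.den : ℤ) - ab ≠ 0 by omega)).lt_or_eq with h | h
        · exact h
        · exfalso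
          obtain ⟨c, hc⟩ := Int.dvd_of_emod_eq_zero h.symm
          have hrd : ((x.den : ℤ) - ab) ∣ 1 :=
            ⟨(x.num - -k) * c - x.num, by linear_combination -hbez2 + (x.num - -k) * hc⟩
          have := Int.le_of_dvd one_pos hrd
          omega
      have hmodlt : (x.den : ℤ) % ((x.den : ℤ) - ab) < (x.den : ℤ) - ab :=
        Int.emod_lt_of_pos _ (by omega)
      have hdivge : 1 ≤ (x.den : ℤ) / ((x.den : ℤ) - ab) := by
        rw [Int.le_ediv_iff_mul_le (by omega)]
        omega
      have hmodle : (x.den : ℤ) % ((x.den : ℤ) - ab) ≤ ab := by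
        have hqr : (x.den : ℤ) % ((x.den : ℤ) - ab)
            = (x.den : ℤ) - ((x.den : ℤ) - ab) * ((x.den : ℤ) / ((x.den : ℤ) - ab)) :=
          Int.emod_def _ _
        have h2 : ((x.den : ℤ) - ab) * 1 ≤ ((x.den : ℤ) - ab) * ((x.den : ℤ) / ((x.den : ℤ) - ab)) :=
          mul_le_mul_of_nonneg_left hdivge (by omega)
        omega
      refine ⟨by positivity, ?_, ((x.den : ℤ) - ab) + (x.num - -k)
        + (x.den : ℤ) % ((x.den : ℤ) - ab), ?_, by omega⟩
      · rw [div_le_one hrQ]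
        exact_mod_cast hp'r'
      · rw [hnum, hden]
        right; right
        refine ⟨by omega, hlt', (x.den : ℤ) % ((x.den : ℤ) - ab), by omega, hmodlt, ?_, rfl⟩
        rw [Int.modEq_iff_dvd]
        refine ⟨(x.num - -k) * ((x.den : ℤ) / ((x.den : ℤ) - ab)) - x.num, ?_⟩
        have hqr : (x.den : ℤ) % ((x.den : ℤ) - ab)
            = (x.den : ℤ) - ((x.den : ℤ) - ab) * ((x.den : ℤ) / ((x.den : ℤ) - ab)) :=
          Int.emod_def _ _
        linear_combination -hbez2 - (x.num - -k) * hqr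

theorem stmt_11 (Q : ℤ) (hQ : 3 ≤ Q) (γ₁ γ₂ : ℚ)
    (h₁ : γ₁ ∈ SFstar Q) (h₂ : γ₂ ∈ SFstar Q) (hlt : γ₁ < γ₂)
    (hcons : ∀ γ ∈ SFstar Q, ¬(γ₁ < γ ∧ γ < γ₂)) :
    γ₂.num * (γ₁.den : ℤ) - γ₁.num * (γ₂.den : ℤ) = 1 := by
  have hγ₁0 : (0:ℚ) ≤ γ₁ := by
    rcases h₁ with h | h
    · simp only [Set.mem_singleton_iff] at h; rw [h]
    · exact h.1.le
  have h₂' : γ₂ ∈ SF Q := by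
    rcases h₂ with h | h
    · exfalso
      simp only [Set.mem_singleton_iff] at h
      rw [h] at hlt
      linarith
    · exact h
  by_cases hone : γ₂ = 1
  · -- γ₂ = 1
    rcases h₁ with hz | hS
    · simp only [Set.mem_singleton_iff] at hz
      rw [hz, hone]
      norm_num
    · have hg1lt : γ₁ < 1 := hone ▸ hlt
      have h0 : 0 < γ₁.num := Rat.num_pos.mpr hS.1
      have h1d : γ₁.num < (γ₁.den : ℤ) := by
        exact_mod_cast Rat.num_lt_denom_iff.mpr hg1lt
      obtain ⟨p, r, p', r', hp0, hr1, hp'1, hr'1, hsum1, hsum2, hbez, hL, hR⟩ :=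
        exists_neighbors hQ hS h0 h1d
      have hbez2 : p' * (γ₁.den : ℤ) - γ₁.num * r' = 1 := by
        have e1 : p' = γ₁.num - p := by omega
        have e2 : r' = (γ₁.den : ℤ) - r := by omega
        rw [e1, e2]; linear_combination hbez
      have hgt : γ₁ < (p' : ℚ) / r' := by
        rw [lt_div_iff'' (by omega) γ₁]
        omega
      have hle1 : (p' : ℚ) / r' ≤ 1 := by
        rcases hR with h | h
        · exfalso
          simp only [Set.mem_singleton_iff] at h
          rw [h] at hgt
          have : (0:ℚ) < γ₁ := Rat.num_pos.mp h0
          linarith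
        · exact h.2.1
      have hge1 : (1:ℚ) ≤ (p' : ℚ) / r' := by
        by_contra hc
        push_neg at hc
        exact hcons _ hR ⟨hgt, hone ▸ hc⟩
      have heq1 : (p' : ℚ) / r' = 1 := le_antisymm hle1 hge1
      have hpr : p' = r' := by
        have hrne : ((r' : ℤ) : ℚ) ≠ 0 := by
          exact_mod_cast (show (r':ℤ) ≠ 0 by omega)
        field_simp at heq1
        exact_mod_cast heq1
      have hgoal : p' * ((γ₁.den : ℤ) - γ₁.num) = 1 := by
        rw [hpr] at hbez2 ⊢
        linear_combination hbez2
      have hp'd : p' ∣ 1 := ⟨(γ₁.den : ℤ) - γ₁.num, hgoal.symm⟩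
      have hp'le := Int.le_of_dvd one_pos hp'd
      have hp'e : p' = 1 := by omega
      rw [hone]
      have hnum1 : (1:ℚ).num = 1 := rfl
      have hden1 : ((1:ℚ).den : ℤ) = 1 := rfl
      rw [hnum1, hden1]
      rw [hp'e] at hgoal
      linarith
  · -- γ₂ interior
    have h0₂ : 0 < γ₂.num := Rat.num_pos.mpr h₂'.1
    have h1₂ : γ₂.num < (γ₂.den : ℤ) := by
      exact_mod_cast Rat.num_lt_denom_iff.mpr (lt_of_le_of_ne h₂'.2.1 hone)
    obtain ⟨p, r, p', r', hp0, hr1, hp'1, hr'1, hsum1, hsum2, hbez, hL, hR⟩ :=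
      exists_neighbors hQ h₂' h0₂ h1₂
    have hbez2 : p' * (γ₂.den : ℤ) - γ₂.num * r' = 1 := by
      have e1 : p' = γ₂.num - p := by omega
      have e2 : r' = (γ₂.den : ℤ) - r := by omega
      rw [e1, e2]; linear_combination hbez
    have hdet : p' * r - p * r' = 1 := by
      have e1 : p' = γ₂.num - p := by omega
      have e2 : r' = (γ₂.den : ℤ) - r := by omega
      rw [e1, e2]; linear_combination hbez
    have hLlt : (p : ℚ) / r < γ₂ := by
      rw [div_lt_iff'' (by omega) γ₂]; omega
    have hRgt : γ₂ < (p' : ℚ) / r' := by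
      rw [lt_div_iff'' (by omega) γ₂]; omega
    have hle : (p : ℚ) / r ≤ γ₁ := by
      by_contra hc
      push_neg at hc
      exact hcons _ hL ⟨hc, hLlt⟩
    rcases eq_or_lt_of_le hle with heq | hltp
    · -- γ₁ = p/r
      have hco : Nat.Coprime p.natAbs r.natAbs :=
        coprime_of_bezout (u := -(γ₂.den : ℤ)) (v := γ₂.num) (by linear_combination hbez)
      have hnum : ((p : ℚ)/(r : ℚ)).num = p := Rat.num_div_eq_of_coprime (by omega) hco
      have hden : (((p : ℚ)/(r : ℚ)).den : ℤ) = r := Rat.den_div_eq_of_coprime (by omega) hco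
      rw [heq] at hnum hden
      rw [hnum, hden]
      exact hbez
    · -- p/r < γ₁ : then γ₁.den > γ₂.den
      have hbet := den_between (by omega) (by omega) hdet hltp (lt_trans hlt hRgt)
      have hd1gt : (γ₂.den : ℤ) < (γ₁.den : ℤ) := by
        rcases lt_or_eq_of_le hbet.1 with h | h
        · omega
        · exfalso
          have hnum1 : γ₁.num = p + p' := hbet.2 h.symm
          have heqq : γ₁ = γ₂ := by
            have hd : γ₁.den = γ₂.den := by omega
            have hn : γ₁.num = γ₂.num := by omega
            exact Rat.ext hn hd
          rw [heqq] at hlt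
          exact lt_irrefl _ hlt
      -- now γ₁ is interior
      have hS₁ : γ₁ ∈ SF Q := by
        rcases h₁ with h | h
        · exfalso
          simp only [Set.mem_singleton_iff] at h
          rw [h] at hd1gt
          have h2p : 0 < γ₂.den := γ₂.pos
          simp only [Rat.den_zero] at hd1gt
          omega
        · exact h
      have h0₁ : 0 < γ₁.num := Rat.num_pos.mpr hS₁.1
      have h1₁ : γ₁.num < (γ₁.den : ℤ) := by
        exact_mod_cast Rat.num_lt_denom_iff.mpr (lt_of_lt_of_le hlt h₂'.2.1)
      obtain ⟨P, R, P', R', hP0, hR1, hP'1, hR'1, hSum1, hSum2, hBez, hL', hR'⟩ :=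
        exists_neighbors hQ hS₁ h0₁ h1₁
      have hBez2 : P' * (γ₁.den : ℤ) - γ₁.num * R' = 1 := by
        have e1 : P' = γ₁.num - P := by omega
        have e2 : R' = (γ₁.den : ℤ) - R := by omega
        rw [e1, e2]; linear_combination hBez
      have hDet : P' * R - P * R' = 1 := by
        have e1 : P' = γ₁.num - P := by omega
        have e2 : R' = (γ₁.den : ℤ) - R := by omega
        rw [e1, e2]; linear_combination hBez
      have hgt1 : γ₁ < (P' : ℚ) / R' := by
        rw [lt_div_iff'' (by omega) γ₁]; omega
      have hge2 : γ₂ ≤ (P' : ℚ) / R' := by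
        by_contra hc
        push_neg at hc
        exact hcons _ hR' ⟨hgt1, hc⟩
      rcases eq_or_lt_of_le hge2 with heq2 | hlt2
      · -- γ₂ = P'/R'
        have hco : Nat.Coprime P'.natAbs R'.natAbs :=
          coprime_of_bezout (u := (γ₁.den : ℤ)) (v := -γ₁.num) (by linear_combination hBez2)
        have hnum : ((P' : ℚ)/(R' : ℚ)).num = P' := Rat.num_div_eq_of_coprime (by omega) hco
        have hden : (((P' : ℚ)/(R' : ℚ)).den : ℤ) = R' := Rat.den_div_eq_of_coprime (by omega) hco
        rw [← heq2] at hnum hden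
        rw [hnum, hden]
        exact hBez2
      · -- γ₂ strictly inside (P/R, P'/R') : contradiction
        exfalso
        have hLlt1 : (P : ℚ) / R < γ₁ := by
          rw [div_lt_iff'' (by omega) γ₁]; omega
        have hbet2 := den_between (by omega) (by omega) hDet (lt_trans hLlt1 hlt) hlt2
        omega
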